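/- If f : X → Y is an almost Q*g-closed, Q*-irresolute surjection and X is Q*-normal, then Y is Q*-normal. -/
import Mathlib


open Set Topology

def QStarClosed {X : Type*} [TopologicalSpace X] (A : Set X) : Prop :=
  IsClosed A ∧ interior A = ∅

def QStarOpen {X : Type*} [TopologicalSpace X] (A : Set X) : Prop :=
  QStarClosed Aᶜ

def GClosed {X : Type*} [TopologicalSpace X] (A : Set X) : Prop :=
  ∀ U : Set X, IsOpen U → A ⊆ U → closure A ⊆ U

def QStarGClosed {X : Type*} [TopologicalSpace X] (A : Set X) : Prop :=
  ∀ U : Set X, QStarOpen U → A ⊆ U → closure A ⊆ U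

def QStarGOpen {X : Type*} [TopologicalSpace X] (A : Set X) : Prop :=
  QStarGClosed Aᶜ

def QStarNormal (X : Type*) [TopologicalSpace X] : Prop :=
  ∀ A B : Set X, QStarClosed A → QStarClosed B → Disjoint A B →
    ∃ U V : Set X, IsOpen U ∧ IsOpen V ∧ A ⊆ U ∧ B ⊆ V ∧ Disjoint U V

def NormalSp (X : Type*) [TopologicalSpace X] : Prop :=
  ∀ A B : Set X, IsClosed A → IsClosed B → Disjoint A B →
    ∃ U V : Set X, IsOpen U ∧ IsOpen V ∧ A ⊆ U ∧ B ⊆ V ∧ Disjoint U V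

def GNormal (X : Type*) [TopologicalSpace X] : Prop :=
  ∀ A B : Set X, GClosed A → GClosed B → Disjoint A B →
    ∃ U V : Set X, IsOpen U ∧ IsOpen V ∧ A ⊆ U ∧ B ⊆ V ∧ Disjoint U V

theorem stmt19 {X Y : Type*} [TopologicalSpace X] [TopologicalSpace Y]
    (f : X → Y) (hf : Function.Surjective f)
    (hclosed : ∀ F : Set X, F = closure (interior F) → QStarGClosed (f '' F))
    (hirr : ∀ V : Set Y, QStarOpen V → QStarOpen (f ⁻¹' V))
    (hX : QStarNormal X) : QStarNormal Y := by
  intro A B hA hB hAB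
  have hAo : QStarOpen Aᶜ := by simpa [QStarOpen, compl_compl] using hA
  have hBo : QStarOpen Bᶜ := by simpa [QStarOpen, compl_compl] using hB
  have hpA : QStarClosed (f ⁻¹' A) := by
    have := hirr _ hAo
    simpa [QStarOpen, Set.preimage_compl, compl_compl] using this
  have hpB : QStarClosed (f ⁻¹' B) := by
    have := hirr _ hBo
    simpa [QStarOpen, Set.preimage_compl, compl_compl] using this
  obtain ⟨U, V, hU, hV, hAU, hBV, hUV⟩ := hX _ _ hpA hpB (hAB.preimage f)
  set K : Set X := (interior (closure U))ᶜ with hKdef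
  set K' : Set X := (interior (closure V))ᶜ with hK'def
  have hKc : K = closure ((closure U)ᶜ) := by
    rw [hKdef, ← closure_compl]
  have hK'c : K' = closure ((closure V)ᶜ) := by
    rw [hK'def, ← closure_compl]
  -- K, K' are regular closed
  have hKreg : K = closure (interior K) := by
    have h1 : (closure U)ᶜ ⊆ interior K :=
      interior_maximal (Set.compl_subset_compl.mpr interior_subset)
        isClosed_closure.isOpen_compl
    have h2 : K ⊆ closure (interior K) := by
      conv_lhs => rw [hKc]
      exact closure_mono h1
    have h3 : closure (interior K) ⊆ K :=
      closure_minimal interior_subset isOpen_interior.isClosed_compl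
    exact le_antisymm h2 h3
  have hK'reg : K' = closure (interior K') := by
    have h1 : (closure V)ᶜ ⊆ interior K' :=
      interior_maximal (Set.compl_subset_compl.mpr interior_subset)
        isClosed_closure.isOpen_compl
    have h2 : K' ⊆ closure (interior K') := by
      conv_lhs => rw [hK'c]
      exact closure_mono h1
    have h3 : closure (interior K') ⊆ K' :=
      closure_minimal interior_subset isOpen_interior.isClosed_compl
    exact le_antisymm h2 h3
  -- interiors of closures of U and V are disjoint
  have hdisj : interior (closure U) ∩ interior (closure V) = ∅ := by
    have h1 : interior (closure V) ⊆ Uᶜ := by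
      have hVU : closure V ⊆ Uᶜ :=
        closure_minimal (fun x hx => (Set.disjoint_right.mp hUV hx)) hU.isClosed_compl
      exact interior_subset.trans hVU
    have h2 : closure U ⊆ (interior (closure V))ᶜ :=
      closure_minimal (fun x hx hx' => h1 hx' hx) isOpen_interior.isClosed_compl
    have h3 : interior (closure U) ⊆ (interior (closure V))ᶜ := interior_subset.trans h2
    ext x; simp only [Set.mem_inter_iff, Set.mem_empty_iff_false, iff_false]
    rintro ⟨h4, h5⟩; exact h3 h4 h5
  -- covering: K ∪ K' = univ
  have hcover : K ∪ K' = Set.univ := by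
    rw [hKdef, hK'def, ← Set.compl_inter, hdisj, Set.compl_empty]
  -- images avoid A and B
  have hKA : f '' K ⊆ Aᶜ := by
    rintro y ⟨x, hxK, rfl⟩ hyA
    exact hxK (interior_maximal subset_closure hU (hAU hyA))
  have hK'B : f '' K' ⊆ Bᶜ := by
    rintro y ⟨x, hxK, rfl⟩ hyB
    exact hxK (interior_maximal subset_closure hV (hBV hyB))
  have hclA : closure (f '' K) ⊆ Aᶜ := hclosed K hKreg Aᶜ hAo hKA
  have hclB : closure (f '' K') ⊆ Bᶜ := hclosed K' hK'reg Bᶜ hBo hK'B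
  refine ⟨(closure (f '' K))ᶜ, (closure (f '' K'))ᶜ,
    isClosed_closure.isOpen_compl, isClosed_closure.isOpen_compl,
    fun y hy hy' => hclA hy' hy, fun y hy hy' => hclB hy' hy, ?_⟩
  rw [Set.disjoint_left]
  intro y hyG hyH
  obtain ⟨x, rfl⟩ := hf y
  have hx : x ∈ K ∪ K' := hcover ▸ Set.mem_univ x
  cases hx with
  | inl h => exact hyG (subset_closure ⟨x, h, rfl⟩)
  | inr h => exact hyH (subset_closure ⟨x, h, rfl⟩)
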